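/- Let C and Ĉ be real N×L matrices, g : {1,…,N} → {1,…,R} a community assignment such that N_r ≥ ε·N for every community r, where ε ∈ (0,1], and let Z and Ẑ be the community-based centrality vectors of C and Ĉ respectively (with the same assignment g). Then (1/N)·ẐᵀẐ ≥ (1/N)·ZᵀZ − (2·R²/(N·L·ε²))·‖C‖_F·‖Ĉ − C‖_F. -/

import Mathlib

open Finset

/-- The size `N_r` of community `r` under the community assignment `g`. -/
def commSize {N R : ℕ} (g : Fin N → Fin R) (r : Fin R) : ℕ :=
  (Finset.univ.filter fun i => g i = r).card

/-- The community-based centrality vector of an `N × L` matrix `C` with respect to the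
community assignment `g`:
`Z_k = (1/(L N_{g k})) ∑_{i : g i = g k} ∑_l C i l`. -/
noncomputable def commCentrality {N L R : ℕ} (C : Matrix (Fin N) (Fin L) ℝ)
    (g : Fin N → Fin R) : Fin N → ℝ :=
  fun k => (1 / ((L : ℝ) * (commSize g (g k) : ℝ))) *
    ∑ i ∈ Finset.univ.filter fun i => g i = g k, ∑ l, C i l

/-- The Frobenius norm of a real matrix. -/
noncomputable def frobNorm {N L : ℕ} (C : Matrix (Fin N) (Fin L) ℝ) : ℝ :=
  Real.sqrt (∑ i, ∑ l, (C i l) ^ 2)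

lemma frobNorm_nonneg {N L : ℕ} (C : Matrix (Fin N) (Fin L) ℝ) : 0 ≤ frobNorm C :=
  Real.sqrt_nonneg _

lemma sq_frobNorm {N L : ℕ} (C : Matrix (Fin N) (Fin L) ℝ) :
    (frobNorm C) ^ 2 = ∑ i, ∑ l, (C i l) ^ 2 :=
  Real.sq_sqrt (by positivity)

lemma commCentrality_sub {N L R : ℕ} (A B : Matrix (Fin N) (Fin L) ℝ)
    (g : Fin N → Fin R) (k : Fin N) :
    commCentrality (A - B) g k = commCentrality A g k - commCentrality B g k := by
  simp only [commCentrality, Matrix.sub_apply, Finset.sum_sub_distrib, mul_sub]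

lemma commSize_pos {N R : ℕ} (g : Fin N → Fin R) (k : Fin N) :
    0 < commSize g (g k) := by
  unfold commSize
  exact Finset.card_pos.2 ⟨k, Finset.mem_filter.2 ⟨Finset.mem_univ k, rfl⟩⟩

lemma sq_commCentrality_le {N L R : ℕ} (hL : 0 < L) (C : Matrix (Fin N) (Fin L) ℝ)
    (g : Fin N → Fin R) (k : Fin N) :
    (commCentrality C g k) ^ 2 ≤
      (∑ i, ∑ l, (C i l) ^ 2) / ((L : ℝ) * (commSize g (g k) : ℝ)) := by
  have hNr : 0 < commSize g (g k) := commSize_pos g k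
  have hLR : (0 : ℝ) < (L : ℝ) := by exact_mod_cast hL
  have hNrR : (0 : ℝ) < (commSize g (g k) : ℝ) := by exact_mod_cast hNr
  have hm : (0 : ℝ) < (L : ℝ) * (commSize g (g k) : ℝ) := mul_pos hLR hNrR
  set F := Finset.univ.filter fun i => g i = g k with hF
  set S := ∑ i ∈ F, ∑ l, C i l with hS
  set T := ∑ i, ∑ l, (C i l) ^ 2 with hT
  have hTnn : 0 ≤ T := by positivity
  have hcard : (F.card : ℝ) = (commSize g (g k) : ℝ) := by rw [hF]; rfl
  -- Cauchy–Schwarz in two steps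
  have h1 : S ^ 2 ≤ (F.card : ℝ) * ∑ i ∈ F, (∑ l, C i l) ^ 2 :=
    sq_sum_le_card_mul_sum_sq
  have h2 : ∀ i ∈ F, (∑ l, C i l) ^ 2 ≤ (L : ℝ) * ∑ l, (C i l) ^ 2 := by
    intro i _
    have := sq_sum_le_card_mul_sum_sq (s := (Finset.univ : Finset (Fin L)))
      (f := fun l => C i l)
    simpa using this
  have h3 : ∑ i ∈ F, (∑ l, C i l) ^ 2 ≤ (L : ℝ) * ∑ i ∈ F, ∑ l, (C i l) ^ 2 := by
    rw [Finset.mul_sum]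
    exact Finset.sum_le_sum h2
  have h4 : ∑ i ∈ F, ∑ l, (C i l) ^ 2 ≤ T := by
    rw [hT]
    apply Finset.sum_le_sum_of_subset_of_nonneg (Finset.subset_univ F)
    intro i _ _
    positivity
  have hSsq : S ^ 2 ≤ ((L : ℝ) * (commSize g (g k) : ℝ)) * T := by
    calc S ^ 2 ≤ (F.card : ℝ) * ∑ i ∈ F, (∑ l, C i l) ^ 2 := h1
      _ ≤ (F.card : ℝ) * ((L : ℝ) * ∑ i ∈ F, ∑ l, (C i l) ^ 2) := by
          apply mul_le_mul_of_nonneg_left h3 (by positivity)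
      _ ≤ (F.card : ℝ) * ((L : ℝ) * T) := by
          apply mul_le_mul_of_nonneg_left (mul_le_mul_of_nonneg_left h4 hLR.le)
            (by positivity)
      _ = ((L : ℝ) * (commSize g (g k) : ℝ)) * T := by rw [hcard]; ring
  have hZ : commCentrality C g k = (1 / ((L : ℝ) * (commSize g (g k) : ℝ))) * S := rfl
  rw [hZ]
  rw [mul_pow, le_div_iff₀ hm]
  have hmne : ((L : ℝ) * (commSize g (g k) : ℝ)) ≠ 0 := ne_of_gt hm
  have : (1 / ((L : ℝ) * (commSize g (g k) : ℝ))) ^ 2 * S ^ 2 *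
      ((L : ℝ) * (commSize g (g k) : ℝ)) = S ^ 2 / ((L : ℝ) * (commSize g (g k) : ℝ)) := by
    field_simp
  rw [this, div_le_iff₀ hm]
  calc S ^ 2 ≤ ((L : ℝ) * (commSize g (g k) : ℝ)) * T := hSsq
    _ = T * ((L : ℝ) * (commSize g (g k) : ℝ)) := by ring

set_option maxHeartbeats 2000000 in
/-- If every community has size at least `ε N` with `ε ∈ (0,1]`, then the community-based
centrality vectors `Z, Ẑ` of `C, Ĉ` satisfy
`(1/N) ẐᵀẐ ≥ (1/N) ZᵀZ - (2R²/(N L ε²)) ‖C‖_F ‖Ĉ - C‖_F`. -/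
theorem sq_norm_commCentrality_hat_lower_bound
    (N L R : ℕ) (C Chat : Matrix (Fin N) (Fin L) ℝ) (g : Fin N → Fin R)
    (ε : ℝ) (hε : 0 < ε) (hε1 : ε ≤ 1)
    (hsize : ∀ r : Fin R, ε * N ≤ (commSize g r : ℝ)) :
    (1 / (N : ℝ)) * ∑ k, (commCentrality C g k) ^ 2
        - (2 * (R : ℝ) ^ 2 / ((N : ℝ) * (L : ℝ) * ε ^ 2)) * frobNorm C * frobNorm (Chat - C)
      ≤ (1 / (N : ℝ)) * ∑ k, (commCentrality Chat g k) ^ 2 := by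
  rcases Nat.eq_zero_or_pos N with hN | hN
  · subst hN
    norm_num
  rcases Nat.eq_zero_or_pos L with hL | hL
  · subst hL
    have hz : ∀ (M : Matrix (Fin N) (Fin 0) ℝ) (k : Fin N), commCentrality M g k = 0 := by
      intro M k
      simp [commCentrality]
    simp only [hz C, hz Chat, hz (Chat - C)]
    norm_num
  have hR : 0 < R := (g ⟨0, hN⟩).pos
  have hNR : (0 : ℝ) < (N : ℝ) := by exact_mod_cast hN
  have hLR : (0 : ℝ) < (L : ℝ) := by exact_mod_cast hL
  have hRR : (1 : ℝ) ≤ (R : ℝ) := by exact_mod_cast hR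
  set D := Chat - C with hD
  have hfC : 0 ≤ frobNorm C := frobNorm_nonneg C
  have hfD : 0 ≤ frobNorm D := frobNorm_nonneg D
  set K := frobNorm C * frobNorm D with hK
  have hKnn : 0 ≤ K := mul_nonneg hfC hfD
  -- pointwise bound
  have key : ∀ k : Fin N,
      (commCentrality C g k) ^ 2 - (commCentrality Chat g k) ^ 2 ≤
        2 * (K / ((L : ℝ) * (ε * (N : ℝ)))) := by
    intro k
    have hNr : 0 < commSize g (g k) := commSize_pos g k
    have hNrR : (0 : ℝ) < (commSize g (g k) : ℝ) := by exact_mod_cast hNr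
    have hm : (0 : ℝ) < (L : ℝ) * (commSize g (g k) : ℝ) := mul_pos hLR hNrR
    set m := (L : ℝ) * (commSize g (g k) : ℝ) with hmdef
    set a := commCentrality C g k with hadef
    set d := commCentrality D g k with hddef
    have hhat : commCentrality Chat g k = a + d := by
      have := commCentrality_sub Chat C g k
      rw [← hD] at this
      rw [hddef, this, hadef]; ring
    have ha2 : a ^ 2 ≤ (frobNorm C) ^ 2 / m := by
      rw [sq_frobNorm]; exact sq_commCentrality_le hL C g k
    have hd2 : d ^ 2 ≤ (frobNorm D) ^ 2 / m := by
      rw [sq_frobNorm]; exact sq_commCentrality_le hL D g k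
    have hXnn : 0 ≤ K / m := div_nonneg hKnn hm.le
    have hprod : (a * d) ^ 2 ≤ (K / m) ^ 2 := by
      calc (a * d) ^ 2 = a ^ 2 * d ^ 2 := by ring
        _ ≤ ((frobNorm C) ^ 2 / m) * ((frobNorm D) ^ 2 / m) :=
            mul_le_mul ha2 hd2 (sq_nonneg d) (by positivity)
        _ = (K / m) ^ 2 := by rw [hK]; ring
    have had : -(K / m) ≤ a * d := by nlinarith [hprod, hXnn]
    have hmono : K / m ≤ K / ((L : ℝ) * (ε * (N : ℝ))) := by
      apply div_le_div_of_nonneg_left hKnn (by positivity)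
      rw [hmdef]
      exact mul_le_mul_of_nonneg_left (hsize (g k)) hLR.le
    rw [hhat]
    nlinarith [had, hmono, sq_nonneg d]
  -- sum up
  set SC := ∑ k, (commCentrality C g k) ^ 2 with hSC
  set SH := ∑ k, (commCentrality Chat g k) ^ 2 with hSH
  have hsum : SC - SH ≤ (N : ℝ) * (2 * (K / ((L : ℝ) * (ε * (N : ℝ))))) := by
    rw [hSC, hSH, ← Finset.sum_sub_distrib]
    calc ∑ k, ((commCentrality C g k) ^ 2 - (commCentrality Chat g k) ^ 2)
        ≤ ∑ _k : Fin N, 2 * (K / ((L : ℝ) * (ε * (N : ℝ)))) :=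
          Finset.sum_le_sum fun k _ => key k
      _ = (N : ℝ) * (2 * (K / ((L : ℝ) * (ε * (N : ℝ))))) := by
          rw [Finset.sum_const, Finset.card_univ, Fintype.card_fin, nsmul_eq_mul]
  have h1 : (N : ℝ) * (2 * (K / ((L : ℝ) * (ε * (N : ℝ))))) = 2 * K / ((L : ℝ) * ε) := by
    field_simp
  have hRsq : ε ≤ (R : ℝ) ^ 2 := le_trans hε1 (by nlinarith [hRR])
  have h2 : 2 * K / ((L : ℝ) * ε) ≤ (2 * (R : ℝ) ^ 2 / ((L : ℝ) * ε ^ 2)) * K := by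
    rw [div_mul_eq_mul_div, div_le_div_iff₀ (by positivity) (by positivity)]
    nlinarith [mul_le_mul_of_nonneg_right hRsq hε.le, mul_nonneg hKnn hLR.le, hKnn, hLR.le,
      hε.le]
  have hfin : SC - SH ≤ (2 * (R : ℝ) ^ 2 / ((L : ℝ) * ε ^ 2)) * K := by
    calc SC - SH ≤ (N : ℝ) * (2 * (K / ((L : ℝ) * (ε * (N : ℝ))))) := hsum
      _ = 2 * K / ((L : ℝ) * ε) := h1
      _ ≤ (2 * (R : ℝ) ^ 2 / ((L : ℝ) * ε ^ 2)) * K := h2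
  have hrw : (2 * (R : ℝ) ^ 2 / ((N : ℝ) * (L : ℝ) * ε ^ 2)) * frobNorm C * frobNorm D
      = (1 / (N : ℝ)) * ((2 * (R : ℝ) ^ 2 / ((L : ℝ) * ε ^ 2)) * K) := by
    rw [hK]; field_simp
  rw [hrw]
  have hmul := mul_le_mul_of_nonneg_left hfin (by positivity : (0 : ℝ) ≤ 1 / (N : ℝ))
  have e : (1 / (N : ℝ)) * (SC - SH) = (1 / (N : ℝ)) * SC - (1 / (N : ℝ)) * SH := by ring
  linarith [hmul, e.le, e.ge]
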